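/- Let A be a marked algebra of genus g over a commutative ring R in which 6 is invertible. Then there exist unique elements f_i ∈ F_{D+p_i}A and h_i ∈ F_{D+2p_i}A (for i = 1,…,g) such that f_i ≡ e_i t^2 mod F_D A, h_i ≡ e_i t^3 mod F_{2D} A, h_i^2 − f_i^3 ∈ F_{3D}A, and f_i h_i^2 − f_i^4 ∈ F_{4D}A. -/
import Mathlib


/-- A *marked algebra of genus `g`* over `R` (Definition 1.3 of the paper).  `A` is a
commutative `R`-algebra with an exhaustive `S_g`-valued algebra filtration
`F : (ℤ_{>0})^g → Submodule R A`, `ν ↦ F_{ν₁p₁ + ⋯ + ν_g p_g}A`, which is a morphism of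
lattices, together with a marking: an isomorphism of graded `R`-algebras
`gr^•_{F̄} A ≅ C_{R,g}` (where `F̄_n A = F_{nD}A` for `n ≥ 1`, `F̄₀A = R`, and `C_{R,g}`
is the subring of `(R^g)[t]` of polynomials with no linear term and constant term in
`R`), compatible with the refined filtration.  The marking is encoded by: `F_D A = R·1`
(the degree-one part of `C_{R,g}` vanishes), and for `n ≥ 2` surjective linear maps
`φ n : F_{nD}A → R^g` with kernel `F_{(n-1)D}A` — realizing
`F_{nD}A/F_{(n-1)D}A ≅ ⊕ᵢ R·eᵢtⁿ` — multiplicative (componentwise) on products, such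
that the image of `F_{nD+pᵢ}A/F_{nD}A ↪ F_{(n+1)D}A/F_{nD}A` is exactly `R·eᵢt^{n+1}`. -/
structure MarkedAlgebra (R : Type*) [CommRing R] (g : ℕ) (A : Type*) [CommRing A]
    [Algebra R A] where
  F : (Fin g → ℕ+) → Submodule R A
  φ : (n : ℕ+) → (F (fun _ => n) →ₗ[R] (Fin g → R))
  inf_eq : ∀ ν ν', F (ν ⊓ ν') = F ν ⊓ F ν'
  sup_eq : ∀ ν ν', F (ν ⊔ ν') = F ν ⊔ F ν'
  exhaustive : (⨆ ν, F ν) = ⊤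
  mul_mem : ∀ (ν ν' : Fin g → ℕ+) (x y : A),
    x ∈ F ν → y ∈ F ν' → x * y ∈ F (ν + ν')
  F_D : F (fun _ => 1) = Submodule.span R {1}
  φ_surjective : ∀ n : ℕ+, 2 ≤ n → Function.Surjective (φ n)
  φ_ker : ∀ (n : ℕ+), 2 ≤ n → ∀ x : F (fun _ => n),
    (φ n x = 0 ↔ (x : A) ∈ F (fun _ => n - 1))
  φ_mul : ∀ (n m : ℕ+), 2 ≤ n → 2 ≤ m → ∀ (x : F (fun _ => n)) (y : F (fun _ => m))
    (hxy : (x : A) * (y : A) ∈ F (fun _ => n + m)),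
    φ (n + m) ⟨(x : A) * (y : A), hxy⟩ = fun i => φ n x i * φ m y i
  marked_le : ∀ (n : ℕ+) (i : Fin g) (x : A),
    x ∈ F (fun j => if j = i then n + 1 else n) → ∀ (hx : x ∈ F (fun _ => n + 1)),
    ∀ j : Fin g, j ≠ i → φ (n + 1) ⟨x, hx⟩ j = 0
  marked_ge : ∀ (n : ℕ+) (i : Fin g) (r : R), ∃ x : A,
    x ∈ F (fun j => if j = i then n + 1 else n) ∧ ∃ hx : x ∈ F (fun _ => n + 1),
    φ (n + 1) ⟨x, hx⟩ = Pi.single i r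

namespace MarkedAlgebra

variable {R A : Type*} [CommRing R] [CommRing A] [Algebra R A] {g : ℕ}
variable (M : MarkedAlgebra R g A)

lemma mono {ν ν' : Fin g → ℕ+} (h : ∀ j, ν j ≤ ν' j) : M.F ν ≤ M.F ν' := by
  have h1 : ν ⊔ ν' = ν' := sup_eq_right.mpr (Pi.le_def.mpr h)
  have h2 := M.sup_eq ν ν'
  rw [h1] at h2
  rw [h2]; exact le_sup_left

lemma one_mem (ν : Fin g → ℕ+) : (1 : A) ∈ M.F ν := by
  apply M.mono (ν := fun _ => 1) (fun j => (ν j).one_le)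
  rw [M.F_D]; exact Submodule.mem_span_singleton_self 1

lemma smul_one_mem (r : R) (ν : Fin g → ℕ+) : r • (1 : A) ∈ M.F ν :=
  Submodule.smul_mem _ r (M.one_mem ν)

lemma mem_bot_iff {x : A} : x ∈ M.F (fun _ => 1) ↔ ∃ r : R, r • (1 : A) = x := by
  rw [M.F_D, Submodule.mem_span_singleton]

open Classical in
/-- total version of the marking map -/
noncomputable def p (n : ℕ+) (x : A) : Fin g → R :=
  if hx : x ∈ M.F (fun _ => n) then M.φ n ⟨x, hx⟩ else 0

lemma p_eq (n : ℕ+) {x : A} (hx : x ∈ M.F (fun _ => n)) :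
    M.p n x = M.φ n ⟨x, hx⟩ := dif_pos hx

lemma p_add (n : ℕ+) {x y : A} (hx : x ∈ M.F (fun _ => n)) (hy : y ∈ M.F (fun _ => n)) :
    M.p n (x + y) = M.p n x + M.p n y := by
  rw [M.p_eq n hx, M.p_eq n hy, M.p_eq n (add_mem hx hy),
    show (⟨x + y, add_mem hx hy⟩ : M.F (fun _ => n)) = ⟨x, hx⟩ + ⟨y, hy⟩ from rfl, map_add]

lemma p_sub (n : ℕ+) {x y : A} (hx : x ∈ M.F (fun _ => n)) (hy : y ∈ M.F (fun _ => n)) :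
    M.p n (x - y) = M.p n x - M.p n y := by
  rw [M.p_eq n hx, M.p_eq n hy, M.p_eq n (sub_mem hx hy),
    show (⟨x - y, sub_mem hx hy⟩ : M.F (fun _ => n)) = ⟨x, hx⟩ - ⟨y, hy⟩ from rfl, map_sub]

lemma p_smul (n : ℕ+) (r : R) {x : A} (hx : x ∈ M.F (fun _ => n)) :
    M.p n (r • x) = r • M.p n x := by
  rw [M.p_eq n hx, M.p_eq n (Submodule.smul_mem _ r hx),
    show (⟨r • x, Submodule.smul_mem _ r hx⟩ : M.F (fun _ => n)) = r • ⟨x, hx⟩ from rfl, map_smul]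

lemma p_zero_iff {n : ℕ+} (hn : 2 ≤ n) {x : A} (hx : x ∈ M.F (fun _ => n)) :
    M.p n x = 0 ↔ x ∈ M.F (fun _ => n - 1) := by
  rw [M.p_eq n hx]; exact M.φ_ker n hn ⟨x, hx⟩

lemma p_eq_zero {n m : ℕ+} (hn : 2 ≤ n) (hm : m ≤ n - 1) {x : A}
    (h : x ∈ M.F (fun _ => m)) : M.p n x = 0 := by
  have hx : x ∈ M.F (fun _ => n) :=
    M.mono (fun j => le_trans hm (le_trans (le_of_eq rfl) (PNat.sub_le n 1))) h
  exact (M.p_zero_iff hn hx).mpr (M.mono (fun j => hm) h)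

lemma p_mem {n m : ℕ+} (hn : 2 ≤ n) (hm : n - 1 = m) {x : A}
    (hx : x ∈ M.F (fun _ => n)) (h : M.p n x = 0) : x ∈ M.F (fun _ => m) := by
  subst hm; exact (M.p_zero_iff hn hx).mp h

lemma p_mul {n m k : ℕ+} (hn : 2 ≤ n) (hm : 2 ≤ m) (hk : n + m = k) {x y : A}
    (hx : x ∈ M.F (fun _ => n)) (hy : y ∈ M.F (fun _ => m)) :
    M.p k (x * y) = fun j => M.p n x j * M.p m y j := by
  subst hk
  have hxy : x * y ∈ M.F (fun _ => n + m) := M.mul_mem _ _ x y hx hy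
  rw [M.p_eq _ hxy, M.p_eq n hx, M.p_eq m hy]
  exact M.φ_mul n m hn hm ⟨x, hx⟩ ⟨y, hy⟩ hxy

lemma p_single {n k : ℕ+} (hk : n + 1 = k) (i : Fin g) {x : A}
    (hx : x ∈ M.F (fun j => if j = i then k else n)) (hx' : x ∈ M.F (fun _ => k)) :
    M.p k x = Pi.single i (M.p k x i) := by
  subst hk
  funext j
  by_cases hj : j = i
  · subst hj; rw [Pi.single_eq_same]
  · rw [Pi.single_eq_of_ne hj, M.p_eq _ hx']
    exact M.marked_le n i x hx hx' j hj

lemma p_exists {n k : ℕ+} (hk : n + 1 = k) (i : Fin g) (r : R) :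
    ∃ x : A, x ∈ M.F (fun j => if j = i then k else n) ∧ x ∈ M.F (fun _ => k) ∧
      M.p k x = Pi.single i r := by
  subst hk
  obtain ⟨x, h1, h2, h3⟩ := M.marked_ge n i r
  exact ⟨x, h1, h2, by rw [M.p_eq _ h2]; exact h3⟩

lemma mul_mem_if {i : Fin g} {a b c d e k : ℕ+} (he : a + c = e) (hk : b + d = k) {x y : A}
    (hx : x ∈ M.F (fun j => if j = i then a else b))
    (hy : y ∈ M.F (fun j => if j = i then c else d)) :
    x * y ∈ M.F (fun j => if j = i then e else k) := by
  subst he hk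
  have h := M.mul_mem _ _ x y hx hy
  have e : ((fun j => if j = i then a else b) + (fun j => if j = i then c else d))
      = (fun j : Fin g => if j = i then a + c else b + d) := by
    funext j; by_cases hj : j = i <;> simp [hj]
  rwa [e] at h

lemma mem_if_inf {i : Fin g} {a b n a' : ℕ+} (h1 : a ⊓ n = a') (hb : b ≤ n) {x : A}
    (hx : x ∈ M.F (fun j => if j = i then a else b)) (hx' : x ∈ M.F (fun _ => n)) :
    x ∈ M.F (fun j => if j = i then a' else b) := by
  have h := M.inf_eq (fun j => if j = i then a else b) (fun _ => n)
  have e : ((fun j => if j = i then a else b) ⊓ (fun _ => n))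
      = (fun j : Fin g => if j = i then a' else b) := by
    funext j; by_cases hj : j = i <;> simp [hj]
    · exact h1
    · exact hb
  have hm : x ∈ M.F ((fun j => if j = i then a else b) ⊓ (fun _ => n)) := by
    rw [h]; exact ⟨hx, hx'⟩
  rwa [e] at hm

lemma single_mul_single (i : Fin g) (r s : R) :
    (fun j => Pi.single i r j * Pi.single i s j) = Pi.single i (r * s) := by
  funext j
  by_cases hj : j = i
  · subst hj; simp
  · simp [Pi.single_eq_of_ne hj]


def Good (i : Fin g) (f h : A) : Prop :=
  f ∈ M.F (fun j => if j = i then 2 else 1) ∧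
  h ∈ M.F (fun j => if j = i then 3 else 1) ∧
  (∃ h2 : f ∈ M.F (fun _ => 2), M.φ 2 ⟨f, h2⟩ = Pi.single i 1) ∧
  (∃ h3 : h ∈ M.F (fun _ => 3), M.φ 3 ⟨h, h3⟩ = Pi.single i 1) ∧
  h ^ 2 - f ^ 3 ∈ M.F (fun _ => 3) ∧
  f * h ^ 2 - f ^ 4 ∈ M.F (fun _ => 4)

lemma exists_good (h6 : Invertible (6 : R)) (i : Fin g) : ∃ f h : A, M.Good i f h := by
  letI := h6
  have six : (6 : R) * ⅟(6:R) = 1 := mul_invOf_self 6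
  -- step 1 : f₀
  obtain ⟨f₀, hfC, hf2, hfφ⟩ := M.p_exists (n := 1) (k := 2) rfl i 1
  -- step 2 : h₀
  obtain ⟨w, hwC, hw3, hwφ⟩ := M.p_exists (n := 2) (k := 3) rfl i 1
  have hsup : M.F (fun j => if j = i then 3 else 2)
      = M.F (fun j => if j = i then 3 else 1) ⊔ M.F (fun j => if j = i then 1 else 2) := by
    rw [← M.sup_eq]
    congr 1
    funext j
    by_cases hj : j = i <;> simp [hj, Pi.sup_apply] <;> decide
  rw [hsup, Submodule.mem_sup] at hwC
  obtain ⟨h₀, hh₀C, z, hzC, hzw⟩ := hwC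
  subst hzw
  have hh₀3 : h₀ ∈ M.F (fun _ => 3) :=
    M.mono (fun j => by split <;> decide) hh₀C
  have hz2 : z ∈ M.F (fun _ => 2) :=
    M.mono (fun j => by split <;> decide) hzC
  have ph₀ : M.p 3 h₀ = Pi.single i 1 := by
    have e := M.p_add 3 hh₀3 (M.mono (fun j => by decide) hz2)
    rw [hwφ, M.p_eq_zero (n := 3) (m := 2) (by decide) (by decide) hz2, add_zero] at e
    exact e.symm
  -- basic products
  have hff : f₀ * f₀ ∈ M.F (fun j => if j = i then 4 else 2) := M.mul_mem_if rfl rfl hfC hfC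
  have hff4 : f₀ * f₀ ∈ M.F (fun _ => 4) :=
    M.mono (fun j => by split <;> decide) hff
  have pff : M.p 4 (f₀ * f₀) = Pi.single i 1 := by
    rw [M.p_mul (n := 2) (m := 2) (k := 4) (by decide) (by decide) rfl hf2 hf2, hfφ,
      single_mul_single, one_mul]
  have hfff : f₀ * f₀ * f₀ ∈ M.F (fun j => if j = i then 6 else 3) :=
    M.mul_mem_if rfl rfl hff hfC
  have hfff6 : f₀ * f₀ * f₀ ∈ M.F (fun _ => 6) :=
    M.mono (fun j => by split <;> decide) hfff
  have pfff : M.p 6 (f₀ * f₀ * f₀) = Pi.single i 1 := by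
    rw [M.p_mul (n := 4) (m := 2) (k := 6) (by decide) (by decide) rfl hff4 hf2, pff, hfφ,
      single_mul_single, one_mul]
  have hhh : h₀ * h₀ ∈ M.F (fun j => if j = i then 6 else 2) := M.mul_mem_if rfl rfl hh₀C hh₀C
  have hhh6 : h₀ * h₀ ∈ M.F (fun _ => 6) :=
    M.mono (fun j => by split <;> decide) hhh
  have phh : M.p 6 (h₀ * h₀) = Pi.single i 1 := by
    rw [M.p_mul (n := 3) (m := 3) (k := 6) (by decide) (by decide) rfl hh₀3 hh₀3, ph₀,
      single_mul_single, one_mul]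
  have hfh : f₀ * h₀ ∈ M.F (fun j => if j = i then 5 else 2) := M.mul_mem_if rfl rfl hfC hh₀C
  have hfh5 : f₀ * h₀ ∈ M.F (fun _ => 5) :=
    M.mono (fun j => by split <;> decide) hfh
  have pfh : M.p 5 (f₀ * h₀) = Pi.single i 1 := by
    rw [M.p_mul (n := 2) (m := 3) (k := 5) (by decide) (by decide) rfl hf2 hh₀3, hfφ, ph₀,
      single_mul_single, one_mul]
  -- step 3 : x₀ and its grade-6 vanishing
  have hx₀C : h₀ * h₀ - f₀ * f₀ * f₀ ∈ M.F (fun j => if j = i then 6 else 3) :=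
    sub_mem (M.mono (fun j => by split <;> decide) hhh) hfff
  have hx₀6 : h₀ * h₀ - f₀ * f₀ * f₀ ∈ M.F (fun _ => 6) := sub_mem hhh6 hfff6
  have hx₀5 : h₀ * h₀ - f₀ * f₀ * f₀ ∈ M.F (fun _ => 5) := by
    refine M.p_mem (n := 6) (by decide) rfl hx₀6 ?_
    rw [M.p_sub 6 hhh6 hfff6, phh, pfff, sub_self]
  -- step 4 : grade-5 coefficient
  have hx₀C5 : h₀ * h₀ - f₀ * f₀ * f₀ ∈ M.F (fun j => if j = i then 5 else 3) :=
    M.mem_if_inf (by decide) (by decide) hx₀C hx₀5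
  have hx₀sing : M.p 5 (h₀ * h₀ - f₀ * f₀ * f₀)
      = Pi.single i (M.p 5 (h₀ * h₀ - f₀ * f₀ * f₀) i) :=
    M.p_single (n := 4) rfl i
      (M.mono (fun j => by split <;> decide) hx₀C5) hx₀5
  set a : R := M.p 5 (h₀ * h₀ - f₀ * f₀ * f₀) i with ha
  set β : R := -(3 * ⅟(6:R) * a) with hβ
  set h₁ : A := h₀ + β • f₀ with hh₁
  have hh₁C : h₁ ∈ M.F (fun j => if j = i then 3 else 1) :=
    add_mem hh₀C (M.mono (fun j => by split <;> decide)
      (Submodule.smul_mem _ β hfC))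
  have hh₁3 : h₁ ∈ M.F (fun _ => 3) :=
    M.mono (fun j => by split <;> decide) hh₁C
  have ph₁ : M.p 3 h₁ = Pi.single i 1 := by
    rw [hh₁, M.p_add 3 hh₀3 (Submodule.smul_mem _ β (M.mono (fun j => by decide) hf2)),
      M.p_smul 3 β (M.mono (fun j => by decide) hf2),
      M.p_eq_zero (n := 3) (m := 2) (by decide) (by decide) hf2, smul_zero, add_zero, ph₀]
  have key1 : h₁ * h₁ - f₀ * f₀ * f₀
      = (h₀ * h₀ - f₀ * f₀ * f₀) + (2 * β) • (f₀ * h₀) + (β * β) • (f₀ * f₀) := by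
    rw [hh₁]
    simp only [Algebra.smul_def, map_mul, map_add, map_ofNat]
    ring
  have m1 : (2 * β) • (f₀ * h₀) ∈ M.F (fun _ => 5) := Submodule.smul_mem _ _ hfh5
  have m2 : (β * β) • (f₀ * f₀) ∈ M.F (fun _ => 5) :=
    Submodule.smul_mem _ _ (M.mono (fun j => by decide) hff4)
  have hx₁5 : h₁ * h₁ - f₀ * f₀ * f₀ ∈ M.F (fun _ => 5) := by
    rw [key1]; exact add_mem (add_mem hx₀5 m1) m2
  have h2β : 2 * β = -a := by
    rw [hβ]; linear_combination (-a) * six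
  have px₁ : M.p 5 (h₁ * h₁ - f₀ * f₀ * f₀) = 0 := by
    rw [key1, M.p_add 5 (add_mem hx₀5 m1) m2, M.p_add 5 hx₀5 m1,
      M.p_smul 5 _ hfh5, M.p_smul 5 _ (M.mono (fun j => by decide) hff4),
      M.p_eq_zero (n := 5) (m := 4) (by decide) (by decide) hff4, smul_zero, add_zero,
      pfh, hx₀sing, h2β]
    funext j
    by_cases hj : j = i
    · subst hj; simp
    · simp [Pi.single_eq_of_ne hj]
  have hx₁4 : h₁ * h₁ - f₀ * f₀ * f₀ ∈ M.F (fun _ => 4) :=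
    M.p_mem (n := 5) (by decide) rfl hx₁5 px₁
  -- step 6 : grade-4 coefficient
  have hx₁C : h₁ * h₁ - f₀ * f₀ * f₀ ∈ M.F (fun j => if j = i then 6 else 3) :=
    sub_mem (M.mono (fun j => by split <;> decide)
      (M.mul_mem_if (i := i) rfl rfl hh₁C hh₁C)) hfff
  have hx₁C4 : h₁ * h₁ - f₀ * f₀ * f₀ ∈ M.F (fun j => if j = i then 4 else 3) :=
    M.mem_if_inf (by decide) (by decide) hx₁C hx₁4
  have hx₁sing : M.p 4 (h₁ * h₁ - f₀ * f₀ * f₀)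
      = Pi.single i (M.p 4 (h₁ * h₁ - f₀ * f₀ * f₀) i) :=
    M.p_single (n := 3) rfl i hx₁C4 hx₁4
  set b : R := M.p 4 (h₁ * h₁ - f₀ * f₀ * f₀) i with hb
  set α : R := 2 * ⅟(6:R) * b with hα
  set f₁ : A := f₀ + α • 1 with hf₁
  have hf₁C : f₁ ∈ M.F (fun j => if j = i then 2 else 1) :=
    add_mem hfC (M.smul_one_mem α _)
  have hf₁2 : f₁ ∈ M.F (fun _ => 2) :=
    M.mono (fun j => by split <;> decide) hf₁C
  have pf₁ : M.p 2 f₁ = Pi.single i 1 := by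
    rw [hf₁, M.p_add 2 hf2 (M.smul_one_mem α _), M.p_smul 2 α (M.one_mem _),
      M.p_eq_zero (n := 2) (m := 1) (by decide) (by decide) (M.one_mem _), smul_zero,
      add_zero, hfφ]
  have key2 : h₁ * h₁ - f₁ * f₁ * f₁
      = (h₁ * h₁ - f₀ * f₀ * f₀) - (3 * α) • (f₀ * f₀) - (3 * (α * α)) • f₀
        - (α * α * α) • (1 : A) := by
    rw [hf₁]
    simp only [Algebra.smul_def, map_mul, map_add, map_ofNat, mul_one]
    ring
  have n1 : (3 * α) • (f₀ * f₀) ∈ M.F (fun _ => 4) := Submodule.smul_mem _ _ hff4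
  have n2 : (3 * (α * α)) • f₀ ∈ M.F (fun _ => 4) :=
    Submodule.smul_mem _ _ (M.mono (fun j => by decide) hf2)
  have n3 : (α * α * α) • (1 : A) ∈ M.F (fun _ => 4) := M.smul_one_mem _ _
  have hx₂4 : h₁ * h₁ - f₁ * f₁ * f₁ ∈ M.F (fun _ => 4) := by
    rw [key2]; exact sub_mem (sub_mem (sub_mem hx₁4 n1) n2) n3
  have h3α : 3 * α = b := by
    rw [hα]; linear_combination b * six
  have px₂ : M.p 4 (h₁ * h₁ - f₁ * f₁ * f₁) = 0 := by
    rw [key2, M.p_sub 4 (sub_mem (sub_mem hx₁4 n1) n2) n3,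
      M.p_sub 4 (sub_mem hx₁4 n1) n2, M.p_sub 4 hx₁4 n1,
      M.p_smul 4 _ hff4, M.p_smul 4 _ (M.mono (fun j => by decide) hf2),
      M.p_smul 4 _ (M.one_mem _),
      M.p_eq_zero (n := 4) (m := 2) (by decide) (by decide) hf2,
      M.p_eq_zero (n := 4) (m := 1) (by decide) (by decide) (M.one_mem _),
      smul_zero, smul_zero, sub_zero, sub_zero, pff, hx₁sing, h3α]
    funext j
    by_cases hj : j = i
    · subst hj; simp
    · simp [Pi.single_eq_of_ne hj]
  have hx₂3 : h₁ * h₁ - f₁ * f₁ * f₁ ∈ M.F (fun _ => 3) :=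
    M.p_mem (n := 4) (by decide) rfl hx₂4 px₂
  -- step 7 : grade-3 coefficient at i
  set c : R := M.p 3 (h₁ * h₁ - f₁ * f₁ * f₁) i with hc
  set γ : R := -(3 * ⅟(6:R) * c) with hγ
  set h₂ : A := h₁ + γ • 1 with hh₂
  have hh₂C : h₂ ∈ M.F (fun j => if j = i then 3 else 1) :=
    add_mem hh₁C (M.smul_one_mem γ _)
  have hh₂3 : h₂ ∈ M.F (fun _ => 3) :=
    M.mono (fun j => by split <;> decide) hh₂C
  have ph₂ : M.p 3 h₂ = Pi.single i 1 := by
    rw [hh₂, M.p_add 3 hh₁3 (M.smul_one_mem γ _), M.p_smul 3 γ (M.one_mem _),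
      M.p_eq_zero (n := 3) (m := 1) (by decide) (by decide) (M.one_mem _), smul_zero,
      add_zero, ph₁]
  have key3 : h₂ * h₂ - f₁ * f₁ * f₁
      = (h₁ * h₁ - f₁ * f₁ * f₁) + (2 * γ) • h₁ + (γ * γ) • (1 : A) := by
    rw [hh₂]
    simp only [Algebra.smul_def, map_mul, map_add, map_ofNat, mul_one]
    ring
  have k1 : (2 * γ) • h₁ ∈ M.F (fun _ => 3) := Submodule.smul_mem _ _ hh₁3
  have k2 : (γ * γ) • (1 : A) ∈ M.F (fun _ => 3) := M.smul_one_mem _ _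
  have hx₃3 : h₂ * h₂ - f₁ * f₁ * f₁ ∈ M.F (fun _ => 3) := by
    rw [key3]; exact add_mem (add_mem hx₂3 k1) k2
  have h2γ : 2 * γ = -c := by
    rw [hγ]; linear_combination (-c) * six
  have px₃i : M.p 3 (h₂ * h₂ - f₁ * f₁ * f₁) i = 0 := by
    rw [key3, M.p_add 3 (add_mem hx₂3 k1) k2, M.p_add 3 hx₂3 k1,
      M.p_smul 3 _ hh₁3, M.p_smul 3 _ (M.one_mem _),
      M.p_eq_zero (n := 3) (m := 1) (by decide) (by decide) (M.one_mem _), smul_zero,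
      add_zero, ph₁, h2γ]
    simp [← hc]
  -- final assembly
  refine ⟨f₁, h₂, hf₁C, hh₂C, ⟨hf₁2, by rw [← M.p_eq 2 hf₁2]; exact pf₁⟩,
    ⟨hh₂3, by rw [← M.p_eq 3 hh₂3]; exact ph₂⟩, ?_, ?_⟩
  · have e : h₂ ^ 2 - f₁ ^ 3 = h₂ * h₂ - f₁ * f₁ * f₁ := by ring
    rw [e]; exact hx₃3
  · have e : f₁ * h₂ ^ 2 - f₁ ^ 4 = f₁ * (h₂ * h₂ - f₁ * f₁ * f₁) := by ring
    rw [e]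
    have hx₃C : h₂ * h₂ - f₁ * f₁ * f₁ ∈ M.F (fun j => if j = i then 3 else 3) := by
      have e33 : (fun j : Fin g => if j = i then (3:ℕ+) else 3) = fun _ => 3 := by
        funext j; simp
      rw [e33]; exact hx₃3
    have hyC : f₁ * (h₂ * h₂ - f₁ * f₁ * f₁) ∈ M.F (fun j => if j = i then 5 else 4) :=
      M.mul_mem_if rfl rfl hf₁C hx₃C
    have hy5 : f₁ * (h₂ * h₂ - f₁ * f₁ * f₁) ∈ M.F (fun _ => 5) :=
      M.mono (fun j => by split <;> decide) hyC
    refine M.p_mem (n := 5) (by decide) rfl hy5 ?_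
    rw [M.p_mul (n := 2) (m := 3) (k := 5) (by decide) (by decide) rfl hf₁2 hx₃3, pf₁]
    funext j
    by_cases hj : j = i
    · subst hj; simp [px₃i]
    · rw [Pi.single_eq_of_ne hj, zero_mul]; rfl

lemma good_unique (h6 : Invertible (6 : R)) (i : Fin g) {f h f' h' : A}
    (H : M.Good i f h) (H' : M.Good i f' h') : f = f' ∧ h = h' := by
  letI := h6
  have six : (6 : R) * ⅟(6:R) = 1 := mul_invOf_self 6
  obtain ⟨hfC, hhC, ⟨hf2, hfφ'⟩, ⟨hh3, hhφ'⟩, hx3', hy4'⟩ := H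
  obtain ⟨hfC', hhC', ⟨hf2', hfφ''⟩, ⟨hh3', hhφ'''⟩, hx3'', hy4''⟩ := H'
  have pf : M.p 2 f = Pi.single i 1 := by rw [M.p_eq 2 hf2]; exact hfφ'
  have pf' : M.p 2 f' = Pi.single i 1 := by rw [M.p_eq 2 hf2']; exact hfφ''
  have ph : M.p 3 h = Pi.single i 1 := by rw [M.p_eq 3 hh3]; exact hhφ'
  have ph' : M.p 3 h' = Pi.single i 1 := by rw [M.p_eq 3 hh3']; exact hhφ'''
  -- decompose u = f' - f
  have huC : f' - f ∈ M.F (fun j => if j = i then 2 else 1) := sub_mem hfC' hfC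
  have hu2 : f' - f ∈ M.F (fun _ => 2) := sub_mem hf2' hf2
  have pu : M.p 2 (f' - f) = 0 := by rw [M.p_sub 2 hf2' hf2, pf, pf', sub_self]
  obtain ⟨α, hαu⟩ := M.mem_bot_iff.mp (M.p_mem (n := 2) (by decide) rfl hu2 pu)
  have hf'e : f' = f + α • 1 := by rw [hαu]; ring
  -- decompose v = h' - h
  have hvC : h' - h ∈ M.F (fun j => if j = i then 3 else 1) := sub_mem hhC' hhC
  have hv3 : h' - h ∈ M.F (fun _ => 3) := sub_mem hh3' hh3
  have pv : M.p 3 (h' - h) = 0 := by rw [M.p_sub 3 hh3' hh3, ph, ph', sub_self]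
  have hv2 : h' - h ∈ M.F (fun _ => 2) := M.p_mem (n := 3) (by decide) rfl hv3 pv
  have hvC2 : h' - h ∈ M.F (fun j => if j = i then 2 else 1) :=
    M.mem_if_inf (by decide) (by decide) hvC hv2
  have hvsing : M.p 2 (h' - h) = Pi.single i (M.p 2 (h' - h) i) :=
    M.p_single (n := 1) rfl i hvC2 hv2
  set β : R := M.p 2 (h' - h) i with hβ
  have hw2 : h' - h - β • f ∈ M.F (fun _ => 2) :=
    sub_mem hv2 (Submodule.smul_mem _ _ hf2)
  have pw : M.p 2 (h' - h - β • f) = 0 := by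
    rw [M.p_sub 2 hv2 (Submodule.smul_mem _ _ hf2), M.p_smul 2 β hf2, pf, hvsing]
    funext j
    by_cases hj : j = i
    · subst hj; simp
    · simp [Pi.single_eq_of_ne hj]
  obtain ⟨γ, hγw⟩ := M.mem_bot_iff.mp (M.p_mem (n := 2) (by decide) rfl hw2 pw)
  have hh'e : h' = h + β • f + γ • 1 := by rw [hγw]; ring
  -- the two normalized discriminant elements
  have hx3 : h * h - f * f * f ∈ M.F (fun _ => 3) := by
    have e : h * h - f * f * f = h ^ 2 - f ^ 3 := by ring
    rw [e]; exact hx3'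
  have hx3'' : h' * h' - f' * f' * f' ∈ M.F (fun _ => 3) := by
    have e : h' * h' - f' * f' * f' = h' ^ 2 - f' ^ 3 := by ring
    rw [e]; exact hx3''
  -- the i-component of the grade-3 classes vanish
  have pxi : ∀ (f₁ h₁ : A), f₁ ∈ M.F (fun _ => 2) → M.p 2 f₁ = Pi.single i 1 →
      (h₁ * h₁ - f₁ * f₁ * f₁) ∈ M.F (fun _ => 3) →
      f₁ * h₁ ^ 2 - f₁ ^ 4 ∈ M.F (fun _ => 4) → M.p 3 (h₁ * h₁ - f₁ * f₁ * f₁) i = 0 := by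
    intro f₁ h₁ m2 pf₁ m3 m4
    have e : f₁ * (h₁ * h₁ - f₁ * f₁ * f₁) = f₁ * h₁ ^ 2 - f₁ ^ 4 := by ring
    have m4' : f₁ * (h₁ * h₁ - f₁ * f₁ * f₁) ∈ M.F (fun _ => 4) := by rw [e]; exact m4
    have p5 : M.p 5 (f₁ * (h₁ * h₁ - f₁ * f₁ * f₁)) = 0 :=
      M.p_eq_zero (n := 5) (m := 4) (by decide) (by decide) m4'
    rw [M.p_mul (n := 2) (m := 3) (k := 5) (by decide) (by decide) rfl m2 m3] at p5
    have := congrFun p5 i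
    simpa [pf₁] using this
  have pxiv : M.p 3 (h * h - f * f * f) i = 0 := pxi f h hf2 pf hx3 hy4'
  have pxiv' : M.p 3 (h' * h' - f' * f' * f') i = 0 := pxi f' h' hf2' pf' hx3'' hy4''
  -- products needed
  have hfh5 : f * h ∈ M.F (fun _ => 5) := by
    have := M.mul_mem_if (i := i) (e := 5) (k := 2) rfl rfl hfC hhC
    exact M.mono (fun j => by split <;> decide) this
  have pfh : M.p 5 (f * h) = Pi.single i 1 := by
    rw [M.p_mul (n := 2) (m := 3) (k := 5) (by decide) (by decide) rfl hf2 hh3, pf, ph,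
      single_mul_single, one_mul]
  have hff4 : f * f ∈ M.F (fun _ => 4) := by
    have := M.mul_mem_if (i := i) (e := 4) (k := 2) rfl rfl hfC hfC
    exact M.mono (fun j => by split <;> decide) this
  have pff : M.p 4 (f * f) = Pi.single i 1 := by
    rw [M.p_mul (n := 2) (m := 2) (k := 4) (by decide) (by decide) rfl hf2 hf2, pf,
      single_mul_single, one_mul]
  -- the difference d
  have hd3 : h' * h' - f' * f' * f' - (h * h - f * f * f) ∈ M.F (fun _ => 3) :=
    sub_mem hx3'' hx3
  -- grade 5 : β = 0
  have key1 : h' * h' - f' * f' * f' - (h * h - f * f * f)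
      = (2 * β) • (f * h) + ((β * β - 3 * α) • (f * f)
        + ((2 * γ) • h + ((2 * (β * γ) - 3 * (α * α)) • f
        + ((γ * γ - α * (α * α)) • (1 : A))))) := by
    rw [hf'e, hh'e]
    simp only [Algebra.smul_def, map_mul, map_add, map_sub, map_ofNat, mul_one]
    ring
  have t1 : (2 * β) • (f * h) ∈ M.F (fun _ => 5) := Submodule.smul_mem _ _ hfh5
  have t2 : (β * β - 3 * α) • (f * f) ∈ M.F (fun _ => 5) :=
    Submodule.smul_mem _ _ (M.mono (fun j => by decide) hff4)
  have t3 : (2 * γ) • h ∈ M.F (fun _ => 5) :=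
    Submodule.smul_mem _ _ (M.mono (fun j => by decide) hh3)
  have t4 : (2 * (β * γ) - 3 * (α * α)) • f ∈ M.F (fun _ => 5) :=
    Submodule.smul_mem _ _ (M.mono (fun j => by decide) hf2)
  have t5 : (γ * γ - α * (α * α)) • (1 : A) ∈ M.F (fun _ => 5) := M.smul_one_mem _ _
  have p5d : M.p 5 (h' * h' - f' * f' * f' - (h * h - f * f * f)) = 0 :=
    M.p_eq_zero (n := 5) (m := 3) (by decide) (by decide) hd3
  have hβ0 : β = 0 := by
    rw [key1, M.p_add 5 t1 (add_mem t2 (add_mem t3 (add_mem t4 t5))),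
      M.p_add 5 t2 (add_mem t3 (add_mem t4 t5)), M.p_add 5 t3 (add_mem t4 t5),
      M.p_add 5 t4 t5,
      M.p_smul 5 _ hfh5, M.p_smul 5 _ (M.mono (fun j => by decide) hff4),
      M.p_smul 5 _ (M.mono (fun j => by decide) hh3),
      M.p_smul 5 _ (M.mono (fun j => by decide) hf2), M.p_smul 5 _ (M.one_mem _),
      M.p_eq_zero (n := 5) (m := 4) (by decide) (by decide) hff4,
      M.p_eq_zero (n := 5) (m := 3) (by decide) (by decide) hh3,
      M.p_eq_zero (n := 5) (m := 2) (by decide) (by decide) hf2,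
      M.p_eq_zero (n := 5) (m := 1) (by decide) (by decide) (M.one_mem _),
      pfh] at p5d
    have := congrFun p5d i
    simp at this
    linear_combination (3 * ⅟(6:R)) * this - β * six
  -- grade 4 : α = 0
  have hh'e2 : h' = h + γ • 1 := by rw [hh'e, hβ0, zero_smul, add_zero]
  have key2 : h' * h' - f' * f' * f' - (h * h - f * f * f)
      = (-(3 * α)) • (f * f) + ((2 * γ) • h + ((-(3 * (α * α))) • f
        + ((γ * γ - α * (α * α)) • (1 : A)))) := by
    rw [hf'e, hh'e2]
    simp only [Algebra.smul_def, map_mul, map_add, map_sub, map_neg, map_ofNat, mul_one]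
    ring
  have s1 : (-(3 * α)) • (f * f) ∈ M.F (fun _ => 4) := Submodule.smul_mem _ _ hff4
  have s3 : (2 * γ) • h ∈ M.F (fun _ => 4) :=
    Submodule.smul_mem _ _ (M.mono (fun j => by decide) hh3)
  have s4 : (-(3 * (α * α))) • f ∈ M.F (fun _ => 4) :=
    Submodule.smul_mem _ _ (M.mono (fun j => by decide) hf2)
  have s5 : (γ * γ - α * (α * α)) • (1 : A) ∈ M.F (fun _ => 4) := M.smul_one_mem _ _
  have p4d : M.p 4 (h' * h' - f' * f' * f' - (h * h - f * f * f)) = 0 :=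
    M.p_eq_zero (n := 4) (m := 3) (by decide) (by decide) hd3
  have hα0 : α = 0 := by
    rw [key2, M.p_add 4 s1 (add_mem s3 (add_mem s4 s5)), M.p_add 4 s3 (add_mem s4 s5),
      M.p_add 4 s4 s5,
      M.p_smul 4 _ hff4, M.p_smul 4 _ (M.mono (fun j => by decide) hh3),
      M.p_smul 4 _ (M.mono (fun j => by decide) hf2), M.p_smul 4 _ (M.one_mem _),
      M.p_eq_zero (n := 4) (m := 3) (by decide) (by decide) hh3,
      M.p_eq_zero (n := 4) (m := 2) (by decide) (by decide) hf2,
      M.p_eq_zero (n := 4) (m := 1) (by decide) (by decide) (M.one_mem _),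
      pff] at p4d
    have := congrFun p4d i
    simp at this
    linear_combination (2 * ⅟(6:R)) * this - α * six
  -- grade 3 : γ = 0
  have hf'e2 : f' = f := by rw [hf'e, hα0, zero_smul, add_zero]
  have key3 : h' * h' - f' * f' * f' - (h * h - f * f * f)
      = (2 * γ) • h + (γ * γ) • (1 : A) := by
    rw [hf'e2, hh'e2]
    simp only [Algebra.smul_def, map_mul, map_add, map_ofNat, mul_one]
    ring
  have r1 : (2 * γ) • h ∈ M.F (fun _ => 3) := Submodule.smul_mem _ _ hh3
  have r2 : (γ * γ) • (1 : A) ∈ M.F (fun _ => 3) := M.smul_one_mem _ _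
  have p3d : M.p 3 (h' * h' - f' * f' * f' - (h * h - f * f * f)) i = 0 := by
    rw [M.p_sub 3 hx3'' hx3]
    simp [Pi.sub_apply, pxiv, pxiv']
  have hγ0 : γ = 0 := by
    rw [key3, M.p_add 3 r1 r2, M.p_smul 3 _ hh3, M.p_smul 3 _ (M.one_mem _),
      M.p_eq_zero (n := 3) (m := 1) (by decide) (by decide) (M.one_mem _),
      smul_zero, add_zero, ph] at p3d
    simp at p3d
    linear_combination (3 * ⅟(6:R)) * p3d - γ * six
  refine ⟨hf'e2.symm, ?_⟩
  rw [hh'e2, hγ0, zero_smul, add_zero]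

end MarkedAlgebra

/-- Lemma 1.6(i) of the paper.  Let `A` be a marked algebra of genus
`g` over a commutative ring `R` in which `6` is invertible.  Then there are unique
elements `fᵢ ∈ F_{D+pᵢ}A` and `hᵢ ∈ F_{D+2pᵢ}A` (`i = 1,…,g`) such that
`fᵢ ≡ eᵢt² mod F_D A`, `hᵢ ≡ eᵢt³ mod F_{2D}A`, `hᵢ² − fᵢ³ ∈ F_{3D}A`, and
`fᵢhᵢ² − fᵢ⁴ ∈ F_{4D}A`. -/
theorem stmt7 {R A : Type*} [CommRing R] [CommRing A] [Algebra R A] (g : ℕ)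
    (h6 : Invertible (6 : R)) (M : MarkedAlgebra R g A) :
    ∃! fh : (Fin g → A) × (Fin g → A), ∀ i : Fin g,
      fh.1 i ∈ M.F (fun j => if j = i then 2 else 1) ∧
      fh.2 i ∈ M.F (fun j => if j = i then 3 else 1) ∧
      (∃ h2 : fh.1 i ∈ M.F (fun _ => 2), M.φ 2 ⟨fh.1 i, h2⟩ = Pi.single i 1) ∧
      (∃ h3 : fh.2 i ∈ M.F (fun _ => 3), M.φ 3 ⟨fh.2 i, h3⟩ = Pi.single i 1) ∧
      fh.2 i ^ 2 - fh.1 i ^ 3 ∈ M.F (fun _ => 3) ∧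
      fh.1 i * fh.2 i ^ 2 - fh.1 i ^ 4 ∈ M.F (fun _ => 4) := by
  have hex : ∀ i : Fin g, ∃ f h : A, M.Good i f h := fun i => M.exists_good h6 i
  choose Ff Hh hFH using hex
  refine ⟨(Ff, Hh), fun i => hFH i, ?_⟩
  rintro ⟨f', h'⟩ hyp
  have key : ∀ i, f' i = Ff i ∧ h' i = Hh i := fun i => by
    have hgood : M.Good i (f' i) (h' i) := hyp i
    have := M.good_unique h6 i (hFH i) hgood
    exact ⟨this.1.symm, this.2.symm⟩
  exact Prod.ext (funext fun i => (key i).1) (funext fun i => (key i).2)
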